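/- arXiv:2202.06761 — 2 statements merged into one kernel-verified Lean document; each statement's English description precedes it below -/
import Mathlib

section
/- Let H be a separable real Hilbert space, T > 0, and let X : H → D_T(ℝ) be a continuous linear map, where X(h) = {X_t(h)}_{t∈[0,T]} and D_T(ℝ) carries the topology of uniform convergence in probability. Then for every δ > 0 there exists ρ > 0 such that for every h ∈ H, E( sup_{t∈[0,T]} |1 − e^{iX_t(h)}| ) ≤ δ + 2‖h‖²/ρ². -/
open MeasureTheory ProbabilityTheory Filter Set
open scoped ENNReal NNReal Topology RealInnerProductSpace

noncomputable section

/-- A function indexed by `ℝ≥0` is càdlàg if it is right-continuous and has left limits. -/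
def Cadlag {E : Type*} [TopologicalSpace E] (f : ℝ≥0 → E) : Prop :=
  ∀ t : ℝ≥0, ContinuousWithinAt f (Set.Ici t) t ∧ ∃ l, Filter.Tendsto f (𝓝[<] t) (𝓝 l)

/-- A cylindrical random variable over `H`: a linear map into (equivalence classes of)
real random variables. -/
def IsCylindrical {H Ω : Type*} [NormedAddCommGroup H] [InnerProductSpace ℝ H]
    [MeasurableSpace Ω] (P : Measure Ω) (X : H → Ω → ℝ) : Prop :=
  (∀ h : H, Measurable (X h)) ∧
  (∀ h h' : H, X (h + h') =ᵐ[P] fun ω => X h ω + X h' ω) ∧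
  (∀ (c : ℝ) (h : H), X (c • h) =ᵐ[P] fun ω => c * X h ω)

/-- Continuity of a cylindrical random variable `X : H → L⁰(Ω,F,P)`, where `L⁰` carries the
topology of convergence in probability (sequential formulation). -/
def ContinuousInProbability {H Ω : Type*} [NormedAddCommGroup H] [InnerProductSpace ℝ H]
    [MeasurableSpace Ω] (P : Measure Ω) (X : H → Ω → ℝ) : Prop :=
  ∀ (hs : ℕ → H) (h₀ : H), Filter.Tendsto hs Filter.atTop (𝓝 h₀) →
    MeasureTheory.TendstoInMeasure P (fun n => X (hs n)) Filter.atTop (X h₀)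

/-- `S` is a Hilbert–Schmidt operator: `∑ ‖S eₙ‖² < ∞` for some complete orthonormal system. -/
def IsHilbertSchmidt {H G : Type*} [NormedAddCommGroup H] [InnerProductSpace ℝ H]
    [NormedAddCommGroup G] [InnerProductSpace ℝ G] (S : H →L[ℝ] G) : Prop :=
  ∃ (ι : Type) (_ : Countable ι) (b : HilbertBasis ι ℝ H),
    Summable fun i => ‖S (b i)‖ ^ 2


/-- A function `f : ℝ → E` is càdlàg on `[0,T]`: right-continuous (within `[0,T]`) and with
left limits (within `[0,T]`) at every point of `[0,T]`. -/
def CadlagOn {E : Type*} [TopologicalSpace E] (f : ℝ → E) (T : ℝ) : Prop :=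
  ∀ t ∈ Set.Icc (0 : ℝ) T,
    ContinuousWithinAt f (Set.Icc (0 : ℝ) T ∩ Set.Ici t) t ∧
    ∃ l, Filter.Tendsto f (𝓝[Set.Icc (0 : ℝ) T ∩ Set.Iio t] t) (𝓝 l)

lemma norm_one_sub_exp_le_two (x : ℝ) : ‖1 - Complex.exp (Complex.I * x)‖ ≤ 2 := by
  calc ‖1 - Complex.exp (Complex.I * x)‖
      ≤ ‖(1:ℂ)‖ + ‖Complex.exp (Complex.I * x)‖ := norm_sub_le _ _
    _ ≤ 2 := by
        have h1 : ‖Complex.exp (Complex.I * x)‖ = 1 := by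
          rw [mul_comm]; simp [Complex.norm_exp_ofReal_mul_I]
        rw [h1]; norm_num

lemma ae_zero_on_Icc {H Ω : Type} [NormedAddCommGroup H] [InnerProductSpace ℝ H]
    [MeasurableSpace Ω] (P : Measure Ω) [IsProbabilityMeasure P]
    (T : ℝ) (hT : 0 < T) (X : ℝ → H → Ω → ℝ)
    (hlin : ∀ t ∈ Set.Icc (0 : ℝ) T, IsCylindrical P (X t))
    (hpath : ∀ᵐ ω ∂P, CadlagOn (fun t => X t (0:H) ω) T) :
    ∀ᵐ ω ∂P, ∀ t ∈ Set.Icc (0:ℝ) T, X t (0:H) ω = 0 := by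
  set D : Set ℝ := {x | x ∈ Set.Icc (0:ℝ) T ∧ ∃ q : ℚ, (q:ℝ) = x} ∪ {T} with hDdef
  have hDsub : D ⊆ Set.Icc (0:ℝ) T := by
    rintro x (⟨hx, _⟩ | rfl)
    · exact hx
    · exact ⟨hT.le, le_rfl⟩
  have hDc : D.Countable := by
    apply Set.Countable.union _ (Set.countable_singleton T)
    have hsub : {x : ℝ | x ∈ Set.Icc (0:ℝ) T ∧ ∃ q : ℚ, (q:ℝ) = x}
        ⊆ Set.range (fun q : ℚ => (q:ℝ)) := by
      rintro x ⟨_, q, hq⟩; exact ⟨q, hq⟩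
    exact (Set.countable_range _).mono hsub
  have hzero : ∀ t ∈ D, ∀ᵐ ω ∂P, X t (0:H) ω = 0 := by
    intro t ht
    have h3 := (hlin t (hDsub ht)).2.2 0 0
    rw [smul_zero] at h3
    filter_upwards [h3] with ω hω
    simpa using hω
  have hae : ∀ᵐ ω ∂P, ∀ t ∈ D, X t (0:H) ω = 0 := (ae_ball_iff hDc).2 hzero
  filter_upwards [hae, hpath] with ω hω hcad
  intro t ht
  rcases eq_or_lt_of_le ht.2 with heq | htT
  · exact heq ▸ hω T (Or.inr rfl)
  · have hrc : Filter.Tendsto (fun s => X s (0:H) ω)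
        (𝓝[Set.Icc (0:ℝ) T ∩ Set.Ici t] t) (𝓝 (X t (0:H) ω)) := (hcad t ht).1
    set s' : Set ℝ := {x | x ∈ Set.Ioc t T ∧ ∃ q : ℚ, (q:ℝ) = x} with hs'def
    have hs'sub : s' ⊆ Set.Icc (0:ℝ) T ∩ Set.Ici t := by
      rintro x ⟨hx, _⟩
      exact ⟨⟨le_trans ht.1 hx.1.le, hx.2⟩, hx.1.le⟩
    have hs'D : s' ⊆ D := by
      rintro x ⟨hx, hq⟩
      exact Or.inl ⟨⟨le_trans ht.1 hx.1.le, hx.2⟩, hq⟩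
    have hne : (𝓝[s'] t).NeBot := by
      rw [← mem_closure_iff_nhdsWithin_neBot, Metric.mem_closure_iff]
      intro η hη
      obtain ⟨q, hq1, hq2⟩ := exists_rat_btwn (lt_min (by linarith : t < t + η) htT)
      refine ⟨(q:ℝ), ⟨⟨hq1, le_of_lt (lt_of_lt_of_le hq2 (min_le_right _ _))⟩, q, rfl⟩, ?_⟩
      have hq3 : (q:ℝ) < t + η := lt_of_lt_of_le hq2 (min_le_left _ _)
      rw [Real.dist_eq, abs_sub_comm, abs_of_pos (by linarith)]
      linarith
    have h1 : Filter.Tendsto (fun s => X s (0:H) ω) (𝓝[s'] t) (𝓝 (X t (0:H) ω)) :=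
      hrc.mono_left (nhdsWithin_mono _ hs'sub)
    have h2 : Filter.Tendsto (fun s => X s (0:H) ω) (𝓝[s'] t) (𝓝 0) := by
      have hev : ∀ᶠ x in 𝓝[s'] t, X x (0:H) ω = 0 := by
        filter_upwards [eventually_mem_nhdsWithin] with x hx
        exact hω x (hs'D hx)
      exact Filter.Tendsto.congr' (Filter.EventuallyEq.symm hev) tendsto_const_nhds
    exact tendsto_nhds_unique h1 h2

/-- If `X : H → D_T(ℝ)` is a continuous linear map into the space of càdlàg processes on
`[0,T]` with the topology of uniform convergence in probability, then for every `δ > 0`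
there is `ρ > 0` such that for every `h ∈ H`,
`E(sup_{t ∈ [0,T]} |1 - e^{i X_t(h)}|) ≤ δ + 2‖h‖²/ρ²`. -/
theorem gaussian_bound_of_continuous
    {H Ω : Type} [NormedAddCommGroup H] [InnerProductSpace ℝ H] [CompleteSpace H]
    [TopologicalSpace.SeparableSpace H]
    [MeasurableSpace Ω] (P : Measure Ω) [IsProbabilityMeasure P] (hPcomp : P.IsComplete)
    (T : ℝ) (hT : 0 < T)
    (X : ℝ → H → Ω → ℝ)
    (hlin : ∀ t ∈ Set.Icc (0 : ℝ) T, IsCylindrical P (X t))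
    (hpath : ∀ h : H, ∀ᵐ ω ∂P, CadlagOn (fun t => X t h ω) T)
    -- continuity of `X : H → D_T(ℝ)` for the topology of uniform convergence in probability
    (hXcont : ∀ (hs : ℕ → H) (h₀ : H), Filter.Tendsto hs Filter.atTop (𝓝 h₀) →
      ∀ ε : ℝ, 0 < ε →
        Filter.Tendsto
          (fun n => P {ω | ∃ t ∈ Set.Icc (0 : ℝ) T, ε ≤ |X t (hs n) ω - X t h₀ ω|})
          Filter.atTop (𝓝 0)) :
    ∀ δ : ℝ, 0 < δ → ∃ ρ : ℝ, 0 < ρ ∧ ∀ h : H,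
      ∫⁻ ω, ENNReal.ofReal
          (⨆ t : Set.Icc (0 : ℝ) T, ‖1 - Complex.exp (Complex.I * (X t h ω : ℂ))‖) ∂P
        ≤ ENNReal.ofReal (δ + 2 * ‖h‖ ^ 2 / ρ ^ 2) := by
  intro δ hδ
  -- choose ε from continuity of x ↦ ‖1 - exp(ix)‖ at 0
  obtain ⟨ε, hε, hεbound⟩ : ∃ ε > 0, ∀ x : ℝ, |x| < ε →
      ‖1 - Complex.exp (Complex.I * x)‖ ≤ δ / 2 := by
    have hcont : Filter.Tendsto (fun x : ℝ => ‖1 - Complex.exp (Complex.I * x)‖)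
        (𝓝 0) (𝓝 0) := by
      have hc : Continuous fun x : ℝ => ‖1 - Complex.exp (Complex.I * x)‖ := by
        continuity
      have h0 : ‖1 - Complex.exp (Complex.I * ((0:ℝ):ℂ))‖ = 0 := by simp
      simpa [h0] using hc.tendsto 0
    have hev : ∀ᶠ x in 𝓝 (0:ℝ), ‖1 - Complex.exp (Complex.I * ((x:ℝ):ℂ))‖ < δ / 2 :=
      hcont.eventually_lt_const (half_pos hδ)
    rw [Metric.eventually_nhds_iff] at hev
    obtain ⟨ε, hε, hball⟩ := hev
    exact ⟨ε, hε, fun x hx => (hball (by simpa [Real.dist_eq] using hx)).le⟩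
  have key : ∃ ρ > 0, ∀ h : H, ‖h‖ ≤ ρ →
      P {ω | ∃ t ∈ Set.Icc (0:ℝ) T, ε ≤ |X t h ω - X t 0 ω|} ≤ ENNReal.ofReal (δ/4) := by
    by_contra hcon
    push_neg at hcon
    choose hs hs1 hs2 using fun n : ℕ => hcon (1/(n+1)) (by positivity)
    have htend : Filter.Tendsto hs Filter.atTop (𝓝 0) := by
      rw [tendsto_zero_iff_norm_tendsto_zero]
      exact squeeze_zero (fun n => norm_nonneg _) hs1 tendsto_one_div_add_atTop_nhds_zero_nat
    have hx := hXcont hs 0 htend ε hε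
    have hev := hx.eventually_lt_const
      (show (0:ℝ≥0∞) < ENNReal.ofReal (δ/4) from ENNReal.ofReal_pos.2 (by linarith))
    obtain ⟨n, hn⟩ := hev.exists
    exact absurd (hs2 n) (not_lt.2 hn.le)
  obtain ⟨ρ, hρ, hkey⟩ := key
  refine ⟨ρ, hρ, fun h => ?_⟩
  by_cases hcase : ‖h‖ ≤ ρ
  · have hG := ae_zero_on_Icc P T hT X hlin (hpath 0)
    set Bad : Set Ω := {ω | ∃ t ∈ Set.Icc (0:ℝ) T, ε ≤ |X t h ω - X t 0 ω|} with hBad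
    set N : Set Ω := {ω | ¬ ∀ t ∈ Set.Icc (0:ℝ) T, X t (0:H) ω = 0} with hNdef
    have hN : P N = 0 := MeasureTheory.ae_iff.1 hG
    have hpt : ∀ ω, ENNReal.ofReal
        (⨆ t : Set.Icc (0:ℝ) T, ‖1 - Complex.exp (Complex.I * (X t h ω : ℂ))‖)
        ≤ ENNReal.ofReal (δ/2) + (Bad ∪ N).indicator (fun _ => (2:ℝ≥0∞)) ω := by
      intro ω
      by_cases hω : ω ∈ Bad ∪ N
      · rw [Set.indicator_of_mem hω]
        refine le_trans (le_trans (ENNReal.ofReal_le_ofReal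
          (Real.iSup_le (fun t => norm_one_sub_exp_le_two _) (by norm_num))) ?_) le_add_self
        norm_num
      · rw [Set.indicator_of_notMem hω, add_zero]
        apply ENNReal.ofReal_le_ofReal
        refine Real.iSup_le (fun t => hεbound _ ?_) (by positivity)
        have hnb : ω ∉ Bad := fun hb => hω (Or.inl hb)
        have hnn : ω ∉ N := fun hb => hω (Or.inr hb)
        have h2 : X (↑t) (0:H) ω = 0 := not_not.1 hnn ↑t t.2
        have h1 : |X (↑t) h ω - X (↑t) (0:H) ω| < ε := by
          by_contra hcon2
          exact hnb ⟨↑t, t.2, le_of_not_gt hcon2⟩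
        rw [h2, sub_zero] at h1
        exact h1
    calc ∫⁻ ω, ENNReal.ofReal
          (⨆ t : Set.Icc (0:ℝ) T, ‖1 - Complex.exp (Complex.I * (X t h ω : ℂ))‖) ∂P
        ≤ ∫⁻ ω, (ENNReal.ofReal (δ/2) + (Bad ∪ N).indicator (fun _ => (2:ℝ≥0∞)) ω) ∂P :=
          lintegral_mono hpt
      _ = ENNReal.ofReal (δ/2) * P Set.univ
            + ∫⁻ ω, (Bad ∪ N).indicator (fun _ => (2:ℝ≥0∞)) ω ∂P := by
          rw [lintegral_add_left measurable_const, lintegral_const]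
      _ ≤ ENNReal.ofReal (δ/2) + 2 * P (Bad ∪ N) := by
          rw [measure_univ, mul_one]
          exact add_le_add le_rfl (lintegral_indicator_const_le _ _)
      _ ≤ ENNReal.ofReal (δ/2) + 2 * ENNReal.ofReal (δ/4) := by
          gcongr
          calc P (Bad ∪ N) ≤ P Bad + P N := measure_union_le _ _
            _ ≤ ENNReal.ofReal (δ/4) + 0 := add_le_add (hkey h hcase) hN.le
            _ = ENNReal.ofReal (δ/4) := add_zero _
      _ ≤ ENNReal.ofReal (δ + 2 * ‖h‖ ^ 2 / ρ ^ 2) := by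
          rw [show (2:ℝ≥0∞) = ENNReal.ofReal 2 by norm_num,
            ← ENNReal.ofReal_mul (by norm_num), ← ENNReal.ofReal_add (by linarith) (by linarith)]
          apply ENNReal.ofReal_le_ofReal
          have hnn : (0:ℝ) ≤ 2 * ‖h‖ ^ 2 / ρ ^ 2 := by positivity
          linarith
  · push_neg at hcase
    calc ∫⁻ ω, ENNReal.ofReal
          (⨆ t : Set.Icc (0:ℝ) T, ‖1 - Complex.exp (Complex.I * (X t h ω : ℂ))‖) ∂P
        ≤ ∫⁻ (ω : Ω), (2:ℝ≥0∞) ∂P := lintegral_mono (fun ω => le_trans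
          (ENNReal.ofReal_le_ofReal
            (Real.iSup_le (fun t => norm_one_sub_exp_le_two _) (by norm_num)))
          (by norm_num))
      _ = (2:ℝ≥0∞) := by rw [lintegral_const, measure_univ, mul_one]
      _ ≤ ENNReal.ofReal (δ + 2 * ‖h‖ ^ 2 / ρ ^ 2) := by
          rw [show (2:ℝ≥0∞) = ENNReal.ofReal 2 by norm_num]
          apply ENNReal.ofReal_le_ofReal
          have h2 : (2:ℝ) ≤ 2 * ‖h‖ ^ 2 / ρ ^ 2 := by
            rw [le_div_iff₀ (by positivity)]
            nlinarith [norm_nonneg h]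
          linarith
end
end

section
/- Let H be a separable real Hilbert space, T > 0, and let X = {X_t}_{t∈[0,T]} be a cylindrical process over H with càdlàg paths (for every h ∈ H, {X_t(h)}_{t∈[0,T]} is càdlàg) such that for every t ∈ [0,T] the linear map X_t : H → L⁰(Ω,F,P) is continuous. Then the linear map X : H → D_T(ℝ), h ↦ {X_t(h)}_{t∈[0,T]}, is continuous, where D_T(ℝ) carries the topology of uniform convergence in probability. -/
open MeasureTheory ProbabilityTheory Filter Set
open scoped ENNReal NNReal Topology RealInnerProductSpace

noncomputable section

lemma min1_subadd (a b : ℝ) : min 1 |a + b| ≤ min 1 |a| + min 1 |b| := by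
  rcases le_total 1 |a| with h | h
  · have : min 1 |a| = 1 := min_eq_left h
    have h2 : (0:ℝ) ≤ min 1 |b| := le_min one_pos.le (abs_nonneg b)
    calc min 1 |a+b| ≤ 1 := min_le_left _ _
      _ ≤ min 1 |a| + min 1 |b| := by rw [this]; linarith
  · rcases le_total 1 |b| with h' | h'
    · have : min 1 |b| = 1 := min_eq_left h'
      have h2 : (0:ℝ) ≤ min 1 |a| := le_min one_pos.le (abs_nonneg a)
      calc min 1 |a+b| ≤ 1 := min_le_left _ _
        _ ≤ min 1 |a| + min 1 |b| := by rw [this]; linarith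
    · rw [min_eq_right h, min_eq_right h']
      calc min 1 |a+b| ≤ |a+b| := min_le_right _ _
        _ ≤ |a| + |b| := abs_add_le _ _

lemma min1_tri (a b : ℝ) : min 1 |a| ≤ min 1 |b| + min 1 |a - b| := by
  have := min1_subadd b (a - b)
  simpa using this

lemma ofReal_min1_subadd (a b : ℝ) :
    ENNReal.ofReal (min 1 |a + b|) ≤ ENNReal.ofReal (min 1 |a|) + ENNReal.ofReal (min 1 |b|) := by
  rw [← ENNReal.ofReal_add (le_min one_pos.le (abs_nonneg a)) (le_min one_pos.le (abs_nonneg b))]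
  exact ENNReal.ofReal_le_ofReal (min1_subadd a b)

lemma ofReal_min1_le_one (a : ℝ) : ENNReal.ofReal (min 1 |a|) ≤ 1 :=
  ENNReal.ofReal_le_one.mpr (min_le_left _ _)

/-- A càdlàg function on `[0,T]` is bounded there. -/
lemma cadlagOn_bounded {f : ℝ → ℝ} {T : ℝ} (h : CadlagOn f T) :
    ∃ C : ℝ, ∀ t ∈ Set.Icc (0:ℝ) T, |f t| ≤ C := by
  rcases le_or_gt 0 T with hT | hT
  swap
  · exact ⟨0, fun t ht => absurd (ht.1.trans ht.2) (not_le.mpr hT)⟩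
  have hloc : ∀ t ∈ Set.Icc (0:ℝ) T, ∃ U : Set ℝ, U ∈ 𝓝 t ∧
      ∃ C, ∀ s ∈ U ∩ Set.Icc (0:ℝ) T, |f s| ≤ C := by
    intro t ht
    obtain ⟨hr, l, hl⟩ := h t ht
    have h1 : ∀ᶠ s in 𝓝[Set.Icc (0:ℝ) T ∩ Set.Ici t] t, |f s| ≤ |f t| + 1 := by
      have := hr (Metric.ball_mem_nhds (f t) one_pos)
      filter_upwards [this] with s hs
      have : |f s - f t| < 1 := by simpa [Real.dist_eq] using hs
      calc |f s| = |f t + (f s - f t)| := by ring_nf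
        _ ≤ |f t| + |f s - f t| := abs_add_le _ _
        _ ≤ |f t| + 1 := by linarith
    have h2 : ∀ᶠ s in 𝓝[Set.Icc (0:ℝ) T ∩ Set.Iio t] t, |f s| ≤ |l| + 1 := by
      have := hl (Metric.ball_mem_nhds l one_pos)
      filter_upwards [this] with s hs
      have : |f s - l| < 1 := by simpa [Real.dist_eq] using hs
      calc |f s| = |l + (f s - l)| := by ring_nf
        _ ≤ |l| + |f s - l| := abs_add_le _ _
        _ ≤ |l| + 1 := by linarith
    rw [eventually_nhdsWithin_iff] at h1 h2
    obtain ⟨U, hU, hUo, htU⟩ := eventually_nhds_iff.mp (h1.and h2)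
    refine ⟨U, hUo.mem_nhds htU, max (|f t| + 1) (|l| + 1), ?_⟩
    rintro s ⟨hsU, hsI⟩
    rcases le_or_gt t s with hts | hts
    · exact le_max_of_le_left ((hU s hsU).1 ⟨hsI, hts⟩)
    · exact le_max_of_le_right ((hU s hsU).2 ⟨hsI, hts⟩)
  choose U hU C hC using hloc
  obtain ⟨tf, htf⟩ := isCompact_Icc.elim_nhds_subcover' U hU
  refine ⟨∑ x ∈ tf, |C x x.2|, fun t ht => ?_⟩
  obtain ⟨x, hx, htx⟩ := Set.mem_iUnion₂.mp (htf ht)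
  calc |f t| ≤ C x x.2 := hC x x.2 t ⟨htx, ht⟩
    _ ≤ |C x x.2| := le_abs_self _
    _ ≤ ∑ y ∈ tf, |C y y.2| :=
      Finset.single_le_sum (f := fun y : ↥(Set.Icc (0:ℝ) T) => |C y y.2|)
        (fun y _ => abs_nonneg _) hx

/-- Enumeration of a countable right-dense subset of `[0,T]` containing `T`. -/
lemma exists_enum {T : ℝ} (hT : 0 < T) :
    ∃ d : ℕ → ℝ, (∀ k, d k ∈ Set.Icc (0:ℝ) T) ∧ (∃ k, d k = T) ∧
      ∀ t ∈ Set.Ico (0:ℝ) T, (𝓝[Set.Ioc t T ∩ Set.range d] t).NeBot := by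
  obtain ⟨q, hq⟩ := exists_surjective_nat ℚ
  refine ⟨fun k => if (q k : ℝ) ∈ Set.Icc (0:ℝ) T then (q k : ℝ) else T, fun k => ?_, ?_, ?_⟩
  · dsimp only
    split_ifs with hk
    · exact hk
    · exact ⟨hT.le, le_refl T⟩
  · obtain ⟨k, hk⟩ := hq (-1)
    refine ⟨k, ?_⟩
    dsimp only
    rw [hk]
    have : ((-1 : ℚ) : ℝ) = -1 := by norm_num
    rw [this, if_neg]
    rintro ⟨h0, _⟩; linarith
  · intro t ht
    rw [← mem_closure_iff_nhdsWithin_neBot]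
    have hseq : ∀ j : ℕ, ∃ u : ℝ, u ∈ Set.Ioc t T ∩
        Set.range (fun k => if (q k : ℝ) ∈ Set.Icc (0:ℝ) T then (q k : ℝ) else T) ∧
        u < t + 1/(j+1) := by
      intro j
      have h1 : t < min (t + 1/(j+1)) T := by
        apply lt_min
        · have : (0:ℝ) < 1/(j+1) := by positivity
          linarith
        · exact ht.2
      obtain ⟨r, hr1, hr2⟩ := exists_rat_btwn h1
      have hrT : (r:ℝ) ≤ T := le_of_lt (lt_of_lt_of_le hr2 (min_le_right _ _))
      have hr0 : (0:ℝ) ≤ r := le_of_lt (lt_of_le_of_lt ht.1 hr1)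
      obtain ⟨k, hk⟩ := hq r
      refine ⟨(r:ℝ), ⟨⟨hr1, hrT⟩, ⟨k, ?_⟩⟩, lt_of_lt_of_le hr2 (min_le_left _ _)⟩
      dsimp only
      rw [hk, if_pos ⟨hr0, hrT⟩]
    choose u hu hub using hseq
    have hu1 : ∀ j, t ≤ u j := fun j => (hu j).1.1.le
    have hub' : Tendsto (fun j : ℕ => t + 1/(j+1:ℝ)) atTop (𝓝 (t + 0)) := by
      apply Tendsto.const_add
      exact_mod_cast tendsto_one_div_add_atTop_nhds_zero_nat (𝕜 := ℝ)
    rw [add_zero] at hub'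
    have hut : Tendsto u atTop (𝓝 t) :=
      tendsto_of_tendsto_of_tendsto_of_le_of_le tendsto_const_nhds hub'
        hu1 (fun j => (hub j).le)
    exact mem_closure_of_tendsto hut (Eventually.of_forall (fun j => (hu j)))

/-- Convergence in measure implies convergence of `∫ min 1 |f n - g|`. -/
lemma lintegral_min1_tendsto {Ω : Type*} [MeasurableSpace Ω] (P : Measure Ω)
    [IsProbabilityMeasure P] {f : ℕ → Ω → ℝ} {g : Ω → ℝ}
    (hf : ∀ n, Measurable (f n)) (hg : Measurable g)
    (h : TendstoInMeasure P f atTop g) :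
    Tendsto (fun n => ∫⁻ ω, ENNReal.ofReal (min 1 |f n ω - g ω|) ∂P) atTop (𝓝 0) := by
  rw [ENNReal.tendsto_nhds_zero]
  intro ε hε
  set ε' : ℝ≥0∞ := min ε 1 with hε'def
  have hε'top : ε' ≠ ⊤ := ne_top_of_le_ne_top ENNReal.one_ne_top (min_le_right _ _)
  have hε'0 : 0 < ε' := lt_min hε one_pos
  set e : ℝ := ε'.toReal / 2 with hedef
  have he0 : 0 < e := by
    have := ENNReal.toReal_pos hε'0.ne' hε'top
    positivity
  have hofe : ENNReal.ofReal e = ε' / 2 := by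
    rw [hedef, ENNReal.ofReal_div_of_pos (by norm_num), ENNReal.ofReal_toReal hε'top]
    norm_num
  have hkey : ∀ n, ∫⁻ ω, ENNReal.ofReal (min 1 |f n ω - g ω|) ∂P ≤
      ENNReal.ofReal e + P {ω | e ≤ dist (f n ω) (g ω)} := by
    intro n
    have hmeas : MeasurableSet {ω | e ≤ dist (f n ω) (g ω)} :=
      measurableSet_le measurable_const ((hf n).dist hg)
    have hpt : ∀ ω, ENNReal.ofReal (min 1 |f n ω - g ω|) ≤
        ENNReal.ofReal e + Set.indicator {ω | e ≤ dist (f n ω) (g ω)} (fun _ => 1) ω := by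
      intro ω
      rcases lt_or_ge (dist (f n ω) (g ω)) e with hlt | hle
      · have : |f n ω - g ω| < e := by rwa [Real.dist_eq] at hlt
        calc ENNReal.ofReal (min 1 |f n ω - g ω|) ≤ ENNReal.ofReal e :=
              ENNReal.ofReal_le_ofReal (le_of_lt (lt_of_le_of_lt (min_le_right _ _) this))
          _ ≤ _ := le_self_add
      · have hmem : ω ∈ {ω | e ≤ dist (f n ω) (g ω)} := hle
        rw [Set.indicator_of_mem hmem]
        calc ENNReal.ofReal (min 1 |f n ω - g ω|) ≤ 1 := ofReal_min1_le_one _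
          _ ≤ _ := le_add_self
    calc ∫⁻ ω, ENNReal.ofReal (min 1 |f n ω - g ω|) ∂P
        ≤ ∫⁻ ω, (ENNReal.ofReal e +
            Set.indicator {ω | e ≤ dist (f n ω) (g ω)} (fun _ => 1) ω) ∂P :=
          lintegral_mono hpt
      _ = ENNReal.ofReal e + P {ω | e ≤ dist (f n ω) (g ω)} := by
          rw [lintegral_add_left measurable_const, lintegral_const, measure_univ, mul_one]
          congr 1
          exact lintegral_indicator_one (μ := P) hmeas
  have htail : ∀ᶠ n in atTop, P {ω | e ≤ dist (f n ω) (g ω)} < ε' / 2 :=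
    (tendstoInMeasure_iff_dist.mp h e he0).eventually_lt_const (by simp [ENNReal.div_pos_iff, hε'0.ne', hε'top])
  filter_upwards [htail] with n hn
  calc ∫⁻ ω, ENNReal.ofReal (min 1 |f n ω - g ω|) ∂P
      ≤ ENNReal.ofReal e + P {ω | e ≤ dist (f n ω) (g ω)} := hkey n
    _ ≤ ε' / 2 + ε' / 2 := by rw [hofe]; exact add_le_add_right hn.le _
    _ = ε' := ENNReal.add_halves _
    _ ≤ ε := min_le_left _ _

/-- If `X = {X_t}_{t ∈ [0,T]}` is a cylindrical process with càdlàg paths such that each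
`X_t : H → L⁰(Ω,F,P)` is continuous, then the induced linear map `X : H → D_T(ℝ)` is
continuous for the topology of uniform convergence in probability on `D_T(ℝ)`. -/
theorem inducedMap_continuous
    {H Ω : Type} [NormedAddCommGroup H] [InnerProductSpace ℝ H] [CompleteSpace H]
    [TopologicalSpace.SeparableSpace H]
    [MeasurableSpace Ω] (P : Measure Ω) [IsProbabilityMeasure P] (hPcomp : P.IsComplete)
    (T : ℝ) (hT : 0 < T)
    (X : ℝ → H → Ω → ℝ)
    (hcyl : ∀ t ∈ Set.Icc (0 : ℝ) T, IsCylindrical P (X t))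
    (hpath : ∀ h : H, ∀ᵐ ω ∂P, CadlagOn (fun t => X t h ω) T)
    (hcont : ∀ t ∈ Set.Icc (0 : ℝ) T, ContinuousInProbability P (X t)) :
    ∀ (hs : ℕ → H) (h₀ : H), Filter.Tendsto hs Filter.atTop (𝓝 h₀) →
      ∀ ε : ℝ, 0 < ε →
        Filter.Tendsto
          (fun n => P {ω | ∃ t ∈ Set.Icc (0 : ℝ) T, ε ≤ |X t (hs n) ω - X t h₀ ω|})
          Filter.atTop (𝓝 0) := by
  classical
  obtain ⟨d, hd, ⟨kT, hkT⟩, hdense⟩ := exists_enum hT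
  have hXmeas : ∀ (k : ℕ) (h : H), Measurable (X (d k) h) := fun k h => (hcyl (d k) (hd k)).1 h
  set e : ℕ → H → Ω → ℝ≥0∞ := fun k h ω => ENNReal.ofReal (min 1 |X (d k) h ω|) with he
  set M : H → Ω → ℝ≥0∞ := fun h ω => ⨆ k, e k h ω with hM
  set Φ : H → ℝ≥0∞ := fun h => ∫⁻ ω, M h ω ∂P with hΦ
  have hemeas : ∀ k h, Measurable (e k h) := fun k h =>
    (measurable_const.min (hXmeas k h).abs).ennreal_ofReal
  have hMmeas : ∀ h, Measurable (M h) := fun h => Measurable.iSup (fun k => hemeas k h)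
  have hMle1 : ∀ h ω, M h ω ≤ 1 := fun h ω => iSup_le fun k => ofReal_min1_le_one _
  -- subadditivity
  have hadd : ∀ a b : H, Φ (a + b) ≤ Φ a + Φ b := by
    intro a b
    have hae : ∀ᵐ ω ∂P, ∀ k, X (d k) (a + b) ω = X (d k) a ω + X (d k) b ω := by
      rw [ae_all_iff]; intro k; exact (hcyl (d k) (hd k)).2.1 a b
    calc Φ (a + b) ≤ ∫⁻ ω, (M a ω + M b ω) ∂P := by
          apply lintegral_mono_ae
          filter_upwards [hae] with ω hω
          refine iSup_le fun k => ?_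
          rw [he]
          dsimp only
          rw [hω k]
          exact le_trans (ofReal_min1_subadd _ _)
            (add_le_add (le_iSup (fun k => e k a ω) k) (le_iSup (fun k => e k b ω) k))
      _ = Φ a + Φ b := lintegral_add_left (hMmeas a) _
  have hneg : ∀ a : H, Φ (-a) = Φ a := by
    intro a
    apply lintegral_congr_ae
    have hae : ∀ᵐ ω ∂P, ∀ k, X (d k) (-a) ω = -1 * X (d k) a ω := by
      rw [ae_all_iff]; intro k
      have := (hcyl (d k) (hd k)).2.2 (-1) a
      rwa [neg_one_smul] at this
    filter_upwards [hae] with ω hω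
    apply iSup_congr
    intro k
    rw [he]; dsimp only; rw [hω k]
    congr 1
    rw [neg_one_mul, abs_neg]
  have hsub : ∀ a b : H, Φ b ≤ Φ (a + b) + Φ a := by
    intro a b
    have hb : b = (a + b) + (-a) := by abel
    calc Φ b = Φ ((a + b) + (-a)) := by rw [← hb]
      _ ≤ Φ (a + b) + Φ (-a) := hadd _ _
      _ = Φ (a + b) + Φ a := by rw [hneg]
  -- scalar limit
  have hlim0 : ∀ h : H, Tendsto (fun m : ℕ => Φ ((1/((m:ℝ)+1)) • h)) atTop (𝓝 0) := by
    intro h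
    have haeS : ∀ᵐ ω ∂P, ∀ m k : ℕ,
        X (d k) ((1/((m:ℝ)+1)) • h) ω = (1/((m:ℝ)+1)) * X (d k) h ω := by
      rw [ae_all_iff]; intro m; rw [ae_all_iff]; intro k
      exact (hcyl (d k) (hd k)).2.2 (1/((m:ℝ)+1)) h
    have haeB : ∀ᵐ ω ∂P, ∃ C : ℝ, 0 ≤ C ∧ ∀ k, |X (d k) h ω| ≤ C := by
      filter_upwards [hpath h] with ω hω
      obtain ⟨C, hC⟩ := cadlagOn_bounded hω
      exact ⟨max C 0, le_max_right _ _, fun k => le_trans (hC _ (hd k)) (le_max_left _ _)⟩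
    have hlimpt : ∀ᵐ ω ∂P,
        Tendsto (fun m : ℕ => M ((1/((m:ℝ)+1)) • h) ω) atTop (𝓝 0) := by
      filter_upwards [haeS, haeB] with ω hωS hωB
      obtain ⟨C, hC0, hωB⟩ := hωB
      have hupper : ∀ m : ℕ, M ((1/((m:ℝ)+1)) • h) ω ≤
          ENNReal.ofReal (min 1 (C/((m:ℝ)+1))) := by
        intro m
        refine iSup_le fun k => ?_
        rw [he]; dsimp only; rw [hωS m k]
        apply ENNReal.ofReal_le_ofReal
        apply min_le_min (le_refl (1:ℝ))
        have hpos : (0:ℝ) ≤ 1/((m:ℝ)+1) := by positivity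
        rw [abs_mul, abs_of_nonneg hpos, div_eq_mul_one_div C ((m:ℝ)+1), mul_comm C]
        exact mul_le_mul_of_nonneg_left (hωB k) hpos
      have hupper0 : Tendsto (fun m : ℕ => ENNReal.ofReal (min 1 (C/((m:ℝ)+1))))
          atTop (𝓝 0) := by
        have hdiv : Tendsto (fun m : ℕ => C/((m:ℝ)+1)) atTop (𝓝 0) := by
          have h' := tendsto_one_div_add_atTop_nhds_zero_nat.const_mul C
          rw [mul_zero] at h'
          refine h'.congr fun m => ?_
          rw [mul_one_div]
        have hreal : Tendsto (fun m : ℕ => min 1 (C/((m:ℝ)+1))) atTop (𝓝 0) := by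
          have := (tendsto_const_nhds (x := (1:ℝ)) (f := atTop)).min hdiv
          simpa using this
        have := ENNReal.tendsto_ofReal hreal
        simpa using this
      exact tendsto_of_tendsto_of_tendsto_of_le_of_le tendsto_const_nhds hupper0
        (fun m => zero_le) hupper
    have := tendsto_lintegral_of_dominated_convergence
      (F := fun m ω => M ((1/((m:ℝ)+1)) • h) ω) (f := fun _ => 0) (bound := fun _ => 1)
      (fun m => hMmeas _) (fun m => Eventually.of_forall (fun ω => hMle1 _ _))
      (by simp) hlimpt
    simpa using this
  -- closed sublevel sets
  have hclosed : ∀ δ : ℝ≥0∞, IsClosed {h : H | Φ h ≤ δ} := by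
    intro δ
    set ψ : ℕ → H → Ω → ℝ≥0∞ := fun K h ω => ⨆ k ∈ Set.Iic K, e k h ω with hψ
    set ΦK : ℕ → H → ℝ≥0∞ := fun K h => ∫⁻ ω, ψ K h ω ∂P with hΦK
    have hψmeas : ∀ K h, Measurable (ψ K h) := fun K h =>
      Measurable.biSup (Set.Iic K) (Set.to_countable _) (fun k _ => hemeas k h)
    have hψmono : ∀ h ω, Monotone (fun K => ψ K h ω) := by
      intro h ω K K' hKK'
      exact biSup_mono (fun k hk => le_trans hk hKK')
    have hψsup : ∀ h ω, (⨆ K, ψ K h ω) = M h ω := by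
      intro h ω
      apply le_antisymm
      · exact iSup_le fun K => iSup₂_le fun k _ => le_iSup (fun k => e k h ω) k
      · refine iSup_le fun k => le_trans ?_ (le_iSup (fun K => ψ K h ω) k)
        exact le_biSup (fun i => e i h ω) (Set.mem_Iic.mpr (le_refl k))
    have hΦsup : ∀ h, Φ h = ⨆ K, ΦK K h := by
      intro h
      rw [hΦ]; dsimp only
      rw [show (fun ω => M h ω) = fun ω => ⨆ K, ψ K h ω from funext fun ω => (hψsup h ω).symm]
      exact lintegral_iSup (fun K => hψmeas K h) (fun K K' hKK' ω => hψmono h ω hKK')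
    have hset : {h : H | Φ h ≤ δ} = ⋂ K, {h : H | ΦK K h ≤ δ} := by
      ext h
      constructor
      · intro hh
        refine Set.mem_iInter.mpr fun K => ?_
        have hle : ΦK K h ≤ Φ h := by
          rw [hΦsup h]; exact le_iSup (fun K => ΦK K h) K
        exact le_trans hle hh
      · intro hh
        have h2 := Set.mem_iInter.mp hh
        show Φ h ≤ δ
        rw [hΦsup h]
        exact iSup_le fun K => h2 K
    rw [hset]
    refine isClosed_iInter fun K => IsSeqClosed.isClosed ?_
    intro u p hu hup
    simp only [Set.mem_setOf_eq] at hu ⊢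
    -- error terms
    have herr : Tendsto (fun n => ∑ k ∈ Finset.range (K+1),
        ∫⁻ ω, ENNReal.ofReal (min 1 |X (d k) (u n) ω - X (d k) p ω|) ∂P) atTop (𝓝 0) := by
      have := tendsto_finset_sum (Finset.range (K+1))
        (fun k _ => lintegral_min1_tendsto P (fun n => hXmeas k (u n)) (hXmeas k p)
          (hcont (d k) (hd k) u p hup))
      simpa using this
    have hineq : ∀ n, ΦK K p ≤ ΦK K (u n) + ∑ k ∈ Finset.range (K+1),
        ∫⁻ ω, ENNReal.ofReal (min 1 |X (d k) (u n) ω - X (d k) p ω|) ∂P := by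
      intro n
      have hpt : ∀ ω, ψ K p ω ≤ ψ K (u n) ω + ∑ k ∈ Finset.range (K+1),
          ENNReal.ofReal (min 1 |X (d k) (u n) ω - X (d k) p ω|) := by
        intro ω
        refine iSup₂_le fun k hk => ?_
        have htri : ENNReal.ofReal (min 1 |X (d k) p ω|) ≤
            ENNReal.ofReal (min 1 |X (d k) (u n) ω|) +
            ENNReal.ofReal (min 1 |X (d k) (u n) ω - X (d k) p ω|) := by
          rw [← ENNReal.ofReal_add (le_min one_pos.le (abs_nonneg _))
            (le_min one_pos.le (abs_nonneg _))]
          apply ENNReal.ofReal_le_ofReal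
          have := min1_tri (X (d k) p ω) (X (d k) (u n) ω)
          rwa [abs_sub_comm] at this
        refine le_trans htri (add_le_add ?_ ?_)
        · exact le_biSup (fun i => e i (u n) ω) hk
        · exact Finset.single_le_sum (f := fun k =>
            ENNReal.ofReal (min 1 |X (d k) (u n) ω - X (d k) p ω|))
            (fun k _ => zero_le) (Finset.mem_range.mpr (Nat.lt_succ_of_le hk))
      calc ΦK K p ≤ ∫⁻ ω, (ψ K (u n) ω + ∑ k ∈ Finset.range (K+1),
            ENNReal.ofReal (min 1 |X (d k) (u n) ω - X (d k) p ω|)) ∂P :=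
            lintegral_mono hpt
        _ = _ := by
            rw [lintegral_add_left (hψmeas K (u n)), lintegral_finset_sum]
            intro k hk
            exact (measurable_const.min ((hXmeas k (u n)).sub (hXmeas k p)).abs).ennreal_ofReal
    have : Tendsto (fun n => δ + ∑ k ∈ Finset.range (K+1),
        ∫⁻ ω, ENNReal.ofReal (min 1 |X (d k) (u n) ω - X (d k) p ω|) ∂P) atTop (𝓝 (δ + 0)) :=
      tendsto_const_nhds.add herr
    rw [add_zero] at this
    apply ge_of_tendsto this
    filter_upwards with n
    exact le_trans (hineq n) (add_le_add_left (hu n) _)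
  -- Baire category
  have hbaire : ∀ δ : ℝ≥0∞, 0 < δ → ∃ (m : ℕ) (r : ℝ), 0 < r ∧
      ∀ v : H, ‖v‖ < r → Φ ((1/((m:ℝ)+1)) • v) ≤ δ + δ := by
    intro δ hδ0
    set S : ℕ → Set H := fun m => (fun h : H => (1/((m:ℝ)+1)) • h) ⁻¹' {h : H | Φ h ≤ δ}
      with hS
    have hSclosed : ∀ m, IsClosed (S m) := fun m =>
      (hclosed δ).preimage (continuous_const_smul _)
    have hScover : ⋃ m, S m = Set.univ := by
      rw [Set.eq_univ_iff_forall]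
      intro h
      have := (hlim0 h).eventually_lt_const hδ0
      obtain ⟨m, hm⟩ := this.exists
      exact Set.mem_iUnion.mpr ⟨m, hm.le⟩
    obtain ⟨m, hm⟩ := nonempty_interior_of_iUnion_of_closed hSclosed hScover
    obtain ⟨x, hx⟩ := hm
    obtain ⟨r, hr0, hball⟩ := Metric.isOpen_iff.mp isOpen_interior x hx
    refine ⟨m, r, hr0, fun v hv => ?_⟩
    have hxS0 : x ∈ S m := interior_subset (hball (Metric.mem_ball_self hr0))
    have hxS : Φ ((1/((m:ℝ)+1)) • x) ≤ δ := hxS0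
    have hxvS0 : x + v ∈ S m := by
      refine interior_subset (hball ?_)
      rw [Metric.mem_ball, dist_eq_norm]
      simpa using hv
    have hxvS : Φ ((1/((m:ℝ)+1)) • (x + v)) ≤ δ := hxvS0
    calc Φ ((1/((m:ℝ)+1)) • v)
        ≤ Φ ((1/((m:ℝ)+1)) • x + (1/((m:ℝ)+1)) • v) + Φ ((1/((m:ℝ)+1)) • x) := hsub _ _
      _ = Φ ((1/((m:ℝ)+1)) • (x + v)) + Φ ((1/((m:ℝ)+1)) • x) := by rw [smul_add]
      _ ≤ δ + δ := add_le_add hxvS hxS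
  -- final argument
  intro hs h₀ hlim ε hε
  rw [ENNReal.tendsto_nhds_zero]
  intro η hη
  set c : ℝ≥0∞ := ENNReal.ofReal (min 1 ε) with hc
  have hc0 : 0 < c := ENNReal.ofReal_pos.mpr (lt_min one_pos hε)
  have hc1 : c ≤ 1 := ENNReal.ofReal_le_one.mpr (min_le_left _ _)
  have hctop : c ≠ ⊤ := ne_top_of_le_ne_top ENNReal.one_ne_top hc1
  set η' : ℝ≥0∞ := min η 1 with hη'
  have hη'0 : 0 < η' := lt_min hη one_pos
  have hη'top : η' ≠ ⊤ := ne_top_of_le_ne_top ENNReal.one_ne_top (min_le_right _ _)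
  set δ : ℝ≥0∞ := η' * c / 2 with hδ
  have hδ0 : 0 < δ :=
    ENNReal.div_pos (mul_ne_zero hη'0.ne' hc0.ne') (by norm_num)
  obtain ⟨m, r, hr0, hB⟩ := hbaire δ hδ0
  have h2δ : δ + δ = η' * c := by
    rw [← two_mul, hδ]
    exact ENNReal.mul_div_cancel' (by norm_num) (by norm_num)
  have hgn : Tendsto (fun n => hs n - h₀) atTop (𝓝 0) := by
    have := hlim.sub_const h₀
    simpa using this
  have hev : ∀ᶠ n in atTop, ‖(((m:ℝ)+1)) • (hs n - h₀)‖ < r := by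
    have h1 : Tendsto (fun n => (((m:ℝ)+1)) • (hs n - h₀)) atTop (𝓝 0) := by
      have := hgn.const_smul (((m:ℝ)+1))
      simpa using this
    have h2 : Tendsto (fun n => ‖(((m:ℝ)+1)) • (hs n - h₀)‖) atTop (𝓝 0) := by
      have := h1.norm
      simpa using this
    exact h2.eventually_lt_const hr0
  filter_upwards [hev] with n hn
  -- Φ bound for this n
  have hΦn : Φ (hs n - h₀) ≤ η' * c := by
    have := hB _ hn
    rw [smul_smul, one_div_mul_cancel (by positivity : ((m:ℝ)+1) ≠ 0), one_smul] at this
    exact le_trans this h2δ.le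
  -- a.e. domination
  have hA : ∀ᵐ ω ∂P, ∀ t ∈ Set.Icc (0:ℝ) T,
      ε ≤ |X t (hs n) ω - X t h₀ ω| → c ≤ M (hs n - h₀) ω := by
    have h3 : ∀ᵐ ω ∂P, ∀ k, X (d k) (hs n) ω = X (d k) h₀ ω + X (d k) (hs n - h₀) ω := by
      rw [ae_all_iff]; intro k
      have heq : h₀ + (hs n - h₀) = hs n := by abel
      have := (hcyl (d k) (hd k)).2.1 h₀ (hs n - h₀)
      rw [heq] at this
      exact this
    filter_upwards [hpath (hs n), hpath h₀, h3] with ω hω1 hω2 hω3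
    intro t ht hεt
    set v : ℝ → ℝ := fun s => X s (hs n) ω - X s h₀ ω with hv
    have hMtop : M (hs n - h₀) ω ≠ ⊤ := ne_top_of_le_ne_top ENNReal.one_ne_top (hMle1 _ _)
    have hd_le : ∀ k, min 1 |v (d k)| ≤ (M (hs n - h₀) ω).toReal := by
      intro k
      have hveq : v (d k) = X (d k) (hs n - h₀) ω := by
        rw [hv]; dsimp only; rw [hω3 k]; ring
      rw [hveq, ← ENNReal.ofReal_le_iff_le_toReal hMtop]
      exact le_iSup (fun k => e k (hs n - h₀) ω) k
    have hkey : min 1 |v t| ≤ (M (hs n - h₀) ω).toReal := by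
      rcases eq_or_lt_of_le ht.2 with htT | htT
      · have := hd_le kT
        rw [hkT] at this
        rwa [htT]
      · have hne : (𝓝[Set.Ioc t T ∩ Set.range d] t).NeBot := hdense t ⟨ht.1, htT⟩
        have hsubset : Set.Ioc t T ∩ Set.range d ⊆ Set.Icc (0:ℝ) T ∩ Set.Ici t := by
          rintro s ⟨⟨hs1, hs2⟩, -⟩
          exact ⟨⟨le_trans ht.1 hs1.le, hs2⟩, hs1.le⟩
        have hcw : ContinuousWithinAt (fun s => min 1 |v s|)
            (Set.Icc (0:ℝ) T ∩ Set.Ici t) t := by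
          have hv' : ContinuousWithinAt v (Set.Icc (0:ℝ) T ∩ Set.Ici t) t :=
            ((hω1 t ht).1).sub ((hω2 t ht).1)
          exact (continuous_const.min continuous_abs).continuousAt.comp_continuousWithinAt hv'
        have htend : Tendsto (fun s => min 1 |v s|) (𝓝[Set.Ioc t T ∩ Set.range d] t)
            (𝓝 (min 1 |v t|)) :=
          hcw.mono_left (nhdsWithin_mono t hsubset)
        apply le_of_tendsto htend
        filter_upwards [self_mem_nhdsWithin] with s hs'
        obtain ⟨-, k, hk⟩ := hs'
        rw [← hk]
        exact hd_le k
    rw [hc, ENNReal.ofReal_le_iff_le_toReal hMtop]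
    calc min 1 ε ≤ min 1 |v t| := min_le_min (le_refl 1) hεt
      _ ≤ _ := hkey
  -- combine
  have hsplit : P {ω | ∃ t ∈ Set.Icc (0 : ℝ) T, ε ≤ |X t (hs n) ω - X t h₀ ω|} ≤
      P {ω | c ≤ M (hs n - h₀) ω} +
      P {ω | ¬ ∀ t ∈ Set.Icc (0:ℝ) T, ε ≤ |X t (hs n) ω - X t h₀ ω| →
        c ≤ M (hs n - h₀) ω} := by
    refine le_trans (measure_mono ?_) (measure_union_le _ _)
    intro ω hω
    by_cases hQ : ∀ t ∈ Set.Icc (0:ℝ) T, ε ≤ |X t (hs n) ω - X t h₀ ω| →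
        c ≤ M (hs n - h₀) ω
    · obtain ⟨t, ht, hεt⟩ := hω
      exact Or.inl (hQ t ht hεt)
    · exact Or.inr hQ
  have hnull : P {ω | ¬ ∀ t ∈ Set.Icc (0:ℝ) T, ε ≤ |X t (hs n) ω - X t h₀ ω| →
      c ≤ M (hs n - h₀) ω} = 0 := by
    exact ae_iff.mp hA
  have hmarkov : c * P {ω | c ≤ M (hs n - h₀) ω} ≤ Φ (hs n - h₀) := by
    have := mul_meas_ge_le_lintegral₀ (μ := P) (hMmeas (hs n - h₀)).aemeasurable c
    exact this
  have hPM : P {ω | c ≤ M (hs n - h₀) ω} ≤ η' := by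
    have h1 : c * P {ω | c ≤ M (hs n - h₀) ω} ≤ c * η' := by
      calc c * P {ω | c ≤ M (hs n - h₀) ω} ≤ Φ (hs n - h₀) := hmarkov
        _ ≤ η' * c := hΦn
        _ = c * η' := mul_comm _ _
    exact (ENNReal.mul_le_mul_iff_right hc0.ne' hctop).mp h1
  calc P {ω | ∃ t ∈ Set.Icc (0 : ℝ) T, ε ≤ |X t (hs n) ω - X t h₀ ω|}
      ≤ P {ω | c ≤ M (hs n - h₀) ω} + 0 := by rw [← hnull]; exact hsplit
    _ = P {ω | c ≤ M (hs n - h₀) ω} := add_zero _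
    _ ≤ η' := hPM
    _ ≤ η := min_le_left _ _
end
end
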